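/- Let G be a finite connected graph, s a vertex, and consider any depth-first search tree T of G rooted at s. If x is a vertex such that the components of G \ {x} not containing s are exactly the vertex sets I_1, ..., I_k, then for each i, the subtree of T induced by I_i together with the DFS finishing times restricted to I_i constitutes a valid depth-first search tree of the induced subgraph on I_i rooted at the neighbor of x in I_i that is the T-child of x. -/

import Mathlib

/-- Reachability in `G` with vertex `x` deleted. -/
def ReachAvoid {V : Type*} (G : SimpleGraph V) (x a b : V) : Prop :=
  Relation.ReflTransGen (fun u v => u ≠ x ∧ v ≠ x ∧ G.Adj u v) a b

/-- `u` is an ancestor of `v` in the tree `T` rooted at `s`: `u` lies on the unique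
path from `s` to `v`. -/
def Ancestor {V : Type*} (T : SimpleGraph V) (s u v : V) : Prop :=
  ∀ p : T.Walk s v, p.IsPath → u ∈ p.support

open SimpleGraph Walk

lemma SimpleGraph.Walk.getVert_cons_one {V : Type*} {G : SimpleGraph V} {u v w : V}
    (q : G.Walk v w) (h : G.Adj u v) : (q.cons h).getVert 1 = v := by
  simp [Walk.getVert_cons_succ]

private lemma walk_reachAvoid {V : Type*} {G : SimpleGraph V} {x : V} :
    ∀ {a b : V} (p : G.Walk a b), x ∉ p.support → ReachAvoid G x a b := by
  intro a b p
  induction p with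
  | nil => exact fun _ => Relation.ReflTransGen.refl
  | cons h p ih =>
    intro hx
    rw [Walk.support_cons, List.mem_cons] at hx
    push_neg at hx
    exact Relation.ReflTransGen.head
      ⟨Ne.symm hx.1, fun hc => hx.2 (hc ▸ p.start_mem_support), h⟩ (ih hx.2)

private lemma lift_walk {V : Type*} {T : SimpleGraph V} {I : Set V} :
    ∀ {a b : V} (p : T.Walk a b) (ha : a ∈ I) (hb : b ∈ I),
      (∀ c ∈ p.support, c ∈ I) →
      ∃ q : (T.induce I).Walk ⟨a, ha⟩ ⟨b, hb⟩,
        q.map (SimpleGraph.Embedding.induce I).toHom = p := by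
  intro a b p
  induction p with
  | nil => exact fun _ _ _ => ⟨Walk.nil, rfl⟩
  | @cons a c b h p ih =>
    intro ha hb hsup
    have hc : c ∈ I := hsup c (by simp)
    obtain ⟨q, hq⟩ := ih hc hb (fun d hd => hsup d (by simp [hd]))
    exact ⟨Walk.cons (by exact h) q, by subst hq; rfl⟩

/-- If `T` is a DFS (Trémaux) tree of `G` rooted at `s` with post-order finishing
times `f`, and `I` is a component of `G \ {x}` not containing `s`, then `T`
restricted to `I`, with the finishing times restricted to `I`, is a valid DFS tree
of the induced subgraph on `I`, rooted at the `T`-child `r` of `x` in `I`. -/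
theorem stmt10 {V : Type*} [Fintype V] (G T : SimpleGraph V) (hconn : G.Connected)
    (hle : T ≤ G) (htree : T.IsTree) (s : V)
    (htremaux : ∀ a b : V, G.Adj a b → Ancestor T s a b ∨ Ancestor T s b a)
    (f : V → ℕ) (hfinj : Function.Injective f)
    (hpost : ∀ u v : V, Ancestor T s u v → u ≠ v → f v < f u)
    (x : V) (I : Set V) (u0 : V) (hu0 : u0 ≠ x) (hu0s : ¬ ReachAvoid G x s u0)
    (hI : I = {v | ReachAvoid G x u0 v}) :
    ∃ r : V, ∃ hr : r ∈ I, T.Adj x r ∧ Ancestor T s x r ∧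
      (T.induce I).IsTree ∧ T.induce I ≤ G.induce I ∧
      (∀ a b : I, (G.induce I).Adj a b →
        Ancestor (T.induce I) ⟨r, hr⟩ a b ∨ Ancestor (T.induce I) ⟨r, hr⟩ b a) ∧
      (∀ u v : I, Ancestor (T.induce I) ⟨r, hr⟩ u v → u ≠ v →
        f v.1 < f u.1) := by
  classical
  have memI : ∀ v, v ∈ I ↔ ReachAvoid G x u0 v := fun v => by rw [hI]; rfl
  have hRAsymm : ∀ {a b}, ReachAvoid G x a b → ReachAvoid G x b a :=
    fun h => @Std.Symm.symm _ _ (@Relation.ReflTransGen.stdSymm _ _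
      ⟨fun u v ⟨h1, h2, h3⟩ => ⟨h2, h1, h3.symm⟩⟩) _ _ h
  have hItrans : ∀ {a b}, a ∈ I → ReachAvoid G x a b → b ∈ I :=
    fun ha h => (memI _).2 (((memI _).1 ha).trans h)
  have hu0I : u0 ∈ I := (memI _).2 .refl
  have hInx : ∀ v ∈ I, v ≠ x := by
    intro v hv
    rcases ((memI v).1 hv).cases_tail with h' | ⟨c, _, hstep⟩
    · exact h' ▸ hu0
    · exact hstep.2.1
  have hsnI : s ∉ I := fun hs => hu0s (hRAsymm ((memI s).1 hs))
  -- unique paths from s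
  choose Pa hPa hPuniq using htree.existsUnique_path s
  have hanc_iff : ∀ u v, Ancestor T s u v ↔ u ∈ (Pa v).support := fun u v =>
    ⟨fun h => h (Pa v) (hPa v), fun h q hq => (hPuniq v q hq) ▸ h⟩
  have huniq : ∀ (u v : V) (p q : T.Walk u v), p.IsPath → q.IsPath → p = q := by
    intro u v p q hp hq
    obtain ⟨w, _, hu⟩ := htree.existsUnique_path u v
    rw [hu p hp, hu q hq]
  -- x is an ancestor of every vertex of I
  have hsupmapLe : ∀ {a b : V} (p : T.Walk a b), (p.mapLe hle).support = p.support := by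
    intro a b p
    simp only [Walk.mapLe, Walk.support_map]
    have : ∀ w : V, (Hom.ofLE hle) w = w := fun _ => rfl
    exact List.map_id _
  have hancI : ∀ v ∈ I, Ancestor T s x v := by
    intro v hv
    rw [hanc_iff]
    by_contra hx
    have hra : ReachAvoid G x s v :=
      walk_reachAvoid ((Pa v).mapLe hle) (by rwa [hsupmapLe])
    exact hsnI (hItrans hv (hRAsymm hra))
  have hxPa : ∀ v (hv : v ∈ I), x ∈ (Pa v).support := fun v hv =>
    (hanc_iff x v).1 (hancI v hv)
  -- the walk from x down to v
  set D : (v : V) → v ∈ I → T.Walk x v := fun v hv => (Pa v).dropUntil x (hxPa v hv)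
    with hDdef
  have hDpath : ∀ v (hv : v ∈ I), (D v hv).IsPath := fun v hv => (hPa v).dropUntil _
  -- no vertex of I is in the part of (Pa v) before x
  have Lx : ∀ (v : V) (p : T.Walk s v), p.IsPath → ∀ (h : x ∈ p.support),
      ∀ a ∈ (p.takeUntil x h).support, a ∉ I := by
    intro v p hp h a ha haI
    have hax : a ≠ x := hInx a haI
    have hq : (p.takeUntil x h).IsPath := hp.takeUntil h
    have hq' : ((p.takeUntil x h).takeUntil a ha).IsPath := hq.takeUntil ha
    have hx' : x ∈ ((p.takeUntil x h).takeUntil a ha).support := hancI a haI _ hq'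
    have hnd := hq.support_nodup
    rw [← (p.takeUntil x h).take_spec ha, Walk.support_append] at hnd
    have hxdrop : x ∈ ((p.takeUntil x h).dropUntil a ha).support :=
      Walk.end_mem_support _
    rw [Walk.support_eq_cons, List.mem_cons] at hxdrop
    rcases hxdrop with h' | h'
    · exact hax h'.symm
    · exact (List.nodup_append.mp hnd).2.2 x hx' x h' rfl
  -- every non-x vertex of D v is in I
  have L2 : ∀ v (hv : v ∈ I), ∀ w ∈ (D v hv).support, w ≠ x → w ∈ I := by
    intro v hv w hw hwx
    have hd : (D v hv).IsPath := hDpath v hv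
    have hnd := hd.support_nodup
    rw [← (D v hv).take_spec hw, Walk.support_append] at hnd
    have hxtake : x ∈ ((D v hv).takeUntil w hw).support := Walk.start_mem_support _
    have hxdrop : x ∉ ((D v hv).dropUntil w hw).support := by
      rw [Walk.support_eq_cons, List.mem_cons]
      rintro (h' | h')
      · exact hwx h'.symm
      · exact (List.nodup_append.mp hnd).2.2 x hxtake x h' rfl
    have hra : ReachAvoid G x w v :=
      walk_reachAvoid (((D v hv).dropUntil w hw).mapLe hle) (by rwa [hsupmapLe])
    exact hItrans hv (hRAsymm hra)
  -- child is constant along adjacencies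
  have C : ∀ a b (ha : a ∈ I) (hb : b ∈ I), Ancestor T s a b →
      (D a ha).getVert 1 = (D b hb).getVert 1 := by
    intro a b ha hb hA
    obtain ⟨ca, hca, qa, hqa⟩ :=
      Walk.exists_eq_cons_of_ne (Ne.symm (hInx a ha)) (D a ha)
    obtain ⟨cb, hcb, qb, hqb⟩ :=
      Walk.exists_eq_cons_of_ne (Ne.symm (hInx b hb)) (D b hb)
    rw [hqa, hqb, Walk.getVert_cons_one, Walk.getVert_cons_one]
    have haPb := (hanc_iff _ _).1 hA
    rw [← (Pa b).take_spec (hxPa b hb), Walk.mem_support_append_iff] at haPb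
    have haDb : a ∈ (D b hb).support := by
      rcases haPb with h | h
      · exact absurd ha (Lx b (Pa b) (hPa b) (hxPa b hb) a h)
      · exact h
    have hDbpath := hDpath b hb
    rw [hqb, Walk.cons_isPath_iff] at hDbpath
    have haqb : a ∈ qb.support := by
      rw [hqb, Walk.support_cons, List.mem_cons] at haDb
      rcases haDb with h | h
      · exact absurd h (hInx a ha)
      · exact h
    have hpath2 : (Walk.cons hcb (qb.takeUntil a haqb)).IsPath := by
      rw [Walk.cons_isPath_iff]
      exact ⟨hDbpath.1.takeUntil haqb,
        fun hmem => hDbpath.2 (Walk.support_takeUntil_subset _ _ hmem)⟩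
    have heq := huniq x a (D a ha) _ (hDpath a ha) hpath2
    rw [hqa] at heq
    have h2 := congrArg (fun w : T.Walk x a => w.getVert 1) heq
    simpa [Walk.getVert_cons_one] using h2
  set r : V := (D u0 hu0I).getVert 1 with hrdef
  have hRall : ∀ v, ReachAvoid G x u0 v → ∀ (hv : v ∈ I), (D v hv).getVert 1 = r := by
    intro v h
    induction h with
    | refl => intro hv; rfl
    | @tail c v hstep hadj ih =>
      intro hv
      have hc : c ∈ I := (memI c).2 hstep
      rcases htremaux c v hadj.2.2 with h1 | h1
      · exact (C c v hc hv h1) ▸ ih hc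
      · exact ((C v c hv hc h1).trans (ih hc))
  obtain ⟨c0, hc0adj, q0, hq0⟩ :=
    Walk.exists_eq_cons_of_ne (Ne.symm (hInx u0 hu0I)) (D u0 hu0I)
  have hrc0 : r = c0 := by rw [hrdef, hq0, Walk.getVert_cons_one]
  have hadj_xr : T.Adj x r := hrc0 ▸ hc0adj
  have hrx : r ≠ x := by
    have := hDpath u0 hu0I
    rw [hq0, Walk.cons_isPath_iff] at this
    exact hrc0 ▸ fun hh => this.2 (hh ▸ q0.start_mem_support)
  have hrI : r ∈ I := by
    apply L2 u0 hu0I r _ hrx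
    rw [hq0, Walk.support_cons]
    exact List.mem_cons_of_mem _ (hrc0 ▸ q0.start_mem_support)
  have hancxr : Ancestor T s x r := hancI r hrI
  -- decomposition D v = cons hadj_xr (Q v)
  have S : ∀ v (hv : v ∈ I), ∃ qv : T.Walk r v, D v hv = Walk.cons hadj_xr qv := by
    intro v hv
    obtain ⟨c, hc, q, hq⟩ :=
      Walk.exists_eq_cons_of_ne (Ne.symm (hInx v hv)) (D v hv)
    have : c = r := by
      rw [← hRall v ((memI v).1 hv) hv, hq, Walk.getVert_cons_one]
    subst this
    exact ⟨q, hq⟩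
  choose Q hQ using S
  have hQpath : ∀ v (hv : v ∈ I), (Q v hv).IsPath := by
    intro v hv
    have := hDpath v hv
    rw [hQ v hv, Walk.cons_isPath_iff] at this
    exact this.1
  have hxQ : ∀ v (hv : v ∈ I), x ∉ (Q v hv).support := by
    intro v hv
    have := hDpath v hv
    rw [hQ v hv, Walk.cons_isPath_iff] at this
    exact this.2
  have hQI : ∀ v (hv : v ∈ I), ∀ c ∈ (Q v hv).support, c ∈ I := by
    intro v hv c hc
    refine L2 v hv c ?_ (fun hcx => hxQ v hv (hcx ▸ hc))
    rw [hQ v hv, Walk.support_cons]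
    exact List.mem_cons_of_mem _ hc
  -- membership transfer
  have hmemQ : ∀ b (hb : b ∈ I) a, a ∈ I → Ancestor T s a b → a ∈ (Q b hb).support := by
    intro b hb a ha hA
    have haPb := (hanc_iff _ _).1 hA
    rw [← (Pa b).take_spec (hxPa b hb), Walk.mem_support_append_iff] at haPb
    rcases haPb with h | h
    · exact absurd ha (Lx b (Pa b) (hPa b) (hxPa b hb) a h)
    · rw [show (Pa b).dropUntil x (hxPa b hb) = D b hb from rfl, hQ b hb,
        Walk.support_cons, List.mem_cons] at h
      rcases h with h | h
      · exact absurd h (hInx a ha)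
      · exact h
  -- induced graph machinery
  have hvalinj : Function.Injective
      ((SimpleGraph.Embedding.induce I (G := T)).toHom : I → V) :=
    Subtype.val_injective
  have hmapQ : ∀ v (hv : v ∈ I),
      ∃ q : (T.induce I).Walk ⟨r, hrI⟩ ⟨v, hv⟩,
        q.map (SimpleGraph.Embedding.induce I).toHom = Q v hv := fun v hv =>
    lift_walk (Q v hv) hrI hv (hQI v hv)
  have hindtree : (T.induce I).IsTree := by
    constructor
    · have : Nonempty I := ⟨⟨u0, hu0I⟩⟩
      apply SimpleGraph.Connected.mk
      intro a b
      have key : ∀ v : I, (T.induce I).Reachable ⟨r, hrI⟩ v := by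
        rintro ⟨v, hv⟩
        obtain ⟨q, _⟩ := hmapQ v hv
        exact ⟨q⟩
      exact (key a).symm.trans (key b)
    · intro v c hc
      exact htree.IsAcyclic _ (hc.map hvalinj)
  -- induced ancestor from global ancestor
  have hAncInd : ∀ (b : V) (hb : b ∈ I) (a : V) (ha : a ∈ I), Ancestor T s a b →
      Ancestor (T.induce I) ⟨r, hrI⟩ ⟨a, ha⟩ ⟨b, hb⟩ := by
    intro b hb a ha hA q hq
    have hmq : (q.map (SimpleGraph.Embedding.induce I).toHom).IsPath :=
      Walk.map_isPath_of_injective hvalinj hq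
    have heq : q.map (SimpleGraph.Embedding.induce I).toHom = Q b hb :=
      huniq r b _ _ hmq (hQpath b hb)
    have haQ := hmemQ b hb a ha hA
    rw [← heq] at haQ
    erw [Walk.support_map] at haQ
    obtain ⟨a', ha', hval⟩ := List.mem_map.mp haQ
    exact (Subtype.ext (α := V) hval : a' = ⟨a, ha⟩) ▸ ha'
  refine ⟨r, hrI, hadj_xr, hancxr, hindtree, fun a b h => hle h, ?_, ?_⟩
  · rintro ⟨a, ha⟩ ⟨b, hb⟩ hadj
    rcases htremaux a b hadj with h | h
    · exact Or.inl (hAncInd b hb a ha h)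
    · exact Or.inr (hAncInd a ha b hb h)
  · rintro ⟨u, hu⟩ ⟨v, hv⟩ hA hne
    refine hpost u v ?_ (fun h => hne (Subtype.ext h))
    intro p hp
    rw [hPuniq v p hp]
    obtain ⟨q, hq⟩ := hmapQ v hv
    have hqpath : q.IsPath := by
      rw [← Walk.map_isPath_iff_of_injective hvalinj, hq]
      exact hQpath v hv
    have hmem := hA q hqpath
    have h2 : u ∈ (Q v hv).support := by
      rw [← hq]
      erw [Walk.support_map]
      exact List.mem_map.mpr ⟨⟨u, hu⟩, hmem, rfl⟩
    rw [← (Pa v).take_spec (hxPa v hv), Walk.mem_support_append_iff]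
    right
    rw [show (Pa v).dropUntil x (hxPa v hv) = D v hv from rfl, hQ v hv,
      Walk.support_cons]
    exact List.mem_cons_of_mem _ h2
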